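/- Every 5-regular graph G that contains a spanning copy K of the complete bipartite graph K_{4,4} admits a decomposition into paths with 5 edges such that the middle edge of each path belongs to M = E(G) \ E(K). -/

import Mathlib

open SimpleGraph

/-- matching partner on indices -/
def mi : Fin 8 → Fin 8 := ![1,0,3,2,5,4,7,6]

/-- index-level edge lists of the four paths -/
def L : Fin 4 → List (Sym2 (Fin 8)) :=
  ![[s(2,4), s(4,0), s(0,1), s(1,5), s(5,3)],
    [s(0,6), s(6,2), s(2,3), s(3,7), s(7,1)],
    [s(6,1), s(1,4), s(4,5), s(5,0), s(0,7)],
    [s(4,3), s(3,6), s(6,7), s(7,2), s(2,5)]]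

theorem Lkey : ∀ i j : Fin 8,
    ((((i:ℕ) < 4 ∧ 4 ≤ (j:ℕ)) ∨ (4 ≤ (i:ℕ) ∧ (j:ℕ) < 4)) ∨ j = mi i) →
    ∃ k : Fin 4, s(i,j) ∈ L k ∧ ∀ k' : Fin 4, s(i,j) ∈ L k' → k' = k := by decide

/-- a path with five edges -/
def P5 {V : Type*} (G : SimpleGraph V) {a b c d e f : V}
    (h1 : G.Adj a b) (h2 : G.Adj b c) (h3 : G.Adj c d) (h4 : G.Adj d e) (h5 : G.Adj e f) :
    G.Walk a f :=
  .cons h1 (.cons h2 (.cons h3 (.cons h4 (.cons h5 .nil))))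

lemma P5_edges {V : Type*} (G : SimpleGraph V) {a b c d e f : V}
    (h1 : G.Adj a b) (h2 : G.Adj b c) (h3 : G.Adj c d) (h4 : G.Adj d e) (h5 : G.Adj e f) :
    (P5 G h1 h2 h3 h4 h5).edges = [s(a,b), s(b,c), s(c,d), s(d,e), s(e,f)] := by
  simp [P5]

lemma P5_support {V : Type*} (G : SimpleGraph V) {a b c d e f : V}
    (h1 : G.Adj a b) (h2 : G.Adj b c) (h3 : G.Adj c d) (h4 : G.Adj d e) (h5 : G.Adj e f) :
    (P5 G h1 h2 h3 h4 h5).support = [a,b,c,d,e,f] := by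
  simp [P5]

lemma P5_length {V : Type*} (G : SimpleGraph V) {a b c d e f : V}
    (h1 : G.Adj a b) (h2 : G.Adj b c) (h3 : G.Adj c d) (h4 : G.Adj d e) (h5 : G.Adj e f) :
    (P5 G h1 h2 h3 h4 h5).length = 5 := by
  simp [P5]

lemma aux {V : Type*} (G K : SimpleGraph V) (hKG : K ≤ G)
    (w : Fin 8 → V) (hinj : Function.Injective w)
    (hsurj : ∀ v : V, ∃ i, v = w i)
    (hKiff : ∀ i j : Fin 8, K.Adj (w i) (w j) ↔
      (((i:ℕ) < 4 ∧ 4 ≤ (j:ℕ)) ∨ (4 ≤ (i:ℕ) ∧ (j:ℕ) < 4)))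
    (hMadj : ∀ i : Fin 8, G.Adj (w i) (w (mi i)))
    (hMuniq : ∀ i j : Fin 8, G.Adj (w i) (w j) → ¬K.Adj (w i) (w j) → w j = w (mi i)) :
    ∃ D : Set (Σ u : V, Σ v : V, G.Walk u v),
      (∀ T ∈ D, T.2.2.IsPath ∧ T.2.2.length = 5 ∧
        ∃ e ∈ G.edgeSet \ K.edgeSet, T.2.2.edges[2]? = some e) ∧
      ∀ e ∈ G.edgeSet, ∃! T, T ∈ D ∧ e ∈ T.2.2.edges := by
  have hGc : ∀ i j : Fin 8, (((i:ℕ) < 4 ∧ 4 ≤ (j:ℕ)) ∨ (4 ≤ (i:ℕ) ∧ (j:ℕ) < 4)) →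
      G.Adj (w i) (w j) := fun i j h => hKG ((hKiff i j).2 h)
  have e01 : G.Adj (w 0) (w 1) := by have h := hMadj 0; rwa [show mi 0 = 1 from by decide] at h
  have e23 : G.Adj (w 2) (w 3) := by have h := hMadj 2; rwa [show mi 2 = 3 from by decide] at h
  have e45 : G.Adj (w 4) (w 5) := by have h := hMadj 4; rwa [show mi 4 = 5 from by decide] at h
  have e67 : G.Adj (w 6) (w 7) := by have h := hMadj 6; rwa [show mi 6 = 7 from by decide] at h
  have nk01 : ¬K.Adj (w 0) (w 1) := by rw [hKiff]; decide
  have nk23 : ¬K.Adj (w 2) (w 3) := by rw [hKiff]; decide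
  have nk45 : ¬K.Adj (w 4) (w 5) := by rw [hKiff]; decide
  have nk67 : ¬K.Adj (w 6) (w 7) := by rw [hKiff]; decide
  have h24 : G.Adj (w 2) (w 4) := hGc 2 4 (by decide)
  have h40 : G.Adj (w 4) (w 0) := hGc 4 0 (by decide)
  have h15 : G.Adj (w 1) (w 5) := hGc 1 5 (by decide)
  have h53 : G.Adj (w 5) (w 3) := hGc 5 3 (by decide)
  have h06 : G.Adj (w 0) (w 6) := hGc 0 6 (by decide)
  have h62 : G.Adj (w 6) (w 2) := hGc 6 2 (by decide)
  have h37 : G.Adj (w 3) (w 7) := hGc 3 7 (by decide)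
  have h71 : G.Adj (w 7) (w 1) := hGc 7 1 (by decide)
  have h61 : G.Adj (w 6) (w 1) := hGc 6 1 (by decide)
  have h14 : G.Adj (w 1) (w 4) := hGc 1 4 (by decide)
  have h50 : G.Adj (w 5) (w 0) := hGc 5 0 (by decide)
  have h07 : G.Adj (w 0) (w 7) := hGc 0 7 (by decide)
  have h43 : G.Adj (w 4) (w 3) := hGc 4 3 (by decide)
  have h36 : G.Adj (w 3) (w 6) := hGc 3 6 (by decide)
  have h72 : G.Adj (w 7) (w 2) := hGc 7 2 (by decide)
  have h25 : G.Adj (w 2) (w 5) := hGc 2 5 (by decide)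
  let W1 : G.Walk (w 2) (w 3) := P5 G h24 h40 e01 h15 h53
  let W2 : G.Walk (w 0) (w 1) := P5 G h06 h62 e23 h37 h71
  let W3 : G.Walk (w 6) (w 7) := P5 G h61 h14 e45 h50 h07
  let W4 : G.Walk (w 4) (w 5) := P5 G h43 h36 e67 h72 h25
  let PT : Fin 4 → (Σ u : V, Σ v : V, G.Walk u v) :=
    ![⟨w 2, w 3, W1⟩, ⟨w 0, w 1, W2⟩, ⟨w 6, w 7, W3⟩, ⟨w 4, w 5, W4⟩]
  have hed1 : W1.edges = [s(w 2, w 4), s(w 4, w 0), s(w 0, w 1), s(w 1, w 5), s(w 5, w 3)] :=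
    P5_edges G h24 h40 e01 h15 h53
  have hed2 : W2.edges = [s(w 0, w 6), s(w 6, w 2), s(w 2, w 3), s(w 3, w 7), s(w 7, w 1)] :=
    P5_edges G h06 h62 e23 h37 h71
  have hed3 : W3.edges = [s(w 6, w 1), s(w 1, w 4), s(w 4, w 5), s(w 5, w 0), s(w 0, w 7)] :=
    P5_edges G h61 h14 e45 h50 h07
  have hed4 : W4.edges = [s(w 4, w 3), s(w 3, w 6), s(w 6, w 7), s(w 7, w 2), s(w 2, w 5)] :=
    P5_edges G h43 h36 e67 h72 h25
  have hsup1 : W1.support = [w 2, w 4, w 0, w 1, w 5, w 3] := P5_support G h24 h40 e01 h15 h53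
  have hsup2 : W2.support = [w 0, w 6, w 2, w 3, w 7, w 1] := P5_support G h06 h62 e23 h37 h71
  have hsup3 : W3.support = [w 6, w 1, w 4, w 5, w 0, w 7] := P5_support G h61 h14 e45 h50 h07
  have hsup4 : W4.support = [w 4, w 3, w 6, w 7, w 2, w 5] := P5_support G h43 h36 e67 h72 h25
  have hlen1 : W1.length = 5 := P5_length G h24 h40 e01 h15 h53
  have hlen2 : W2.length = 5 := P5_length G h06 h62 e23 h37 h71
  have hlen3 : W3.length = 5 := P5_length G h61 h14 e45 h50 h07
  have hlen4 : W4.length = 5 := P5_length G h43 h36 e67 h72 h25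
  have hp1 : W1.IsPath := by
    rw [SimpleGraph.Walk.isPath_def, hsup1]; simp [List.nodup_cons, hinj.eq_iff]
  have hp2 : W2.IsPath := by
    rw [SimpleGraph.Walk.isPath_def, hsup2]; simp [List.nodup_cons, hinj.eq_iff]
  have hp3 : W3.IsPath := by
    rw [SimpleGraph.Walk.isPath_def, hsup3]; simp [List.nodup_cons, hinj.eq_iff]
  have hp4 : W4.IsPath := by
    rw [SimpleGraph.Walk.isPath_def, hsup4]; simp [List.nodup_cons, hinj.eq_iff]
  have hmid1 : W1.edges[2]? = some s(w 0, w 1) := by rw [hed1]; rfl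
  have hmid2 : W2.edges[2]? = some s(w 2, w 3) := by rw [hed2]; rfl
  have hmid3 : W3.edges[2]? = some s(w 4, w 5) := by rw [hed3]; rfl
  have hmid4 : W4.edges[2]? = some s(w 6, w 7) := by rw [hed4]; rfl
  have hLmap : ∀ k : Fin 4, (PT k).2.2.edges = (L k).map (Sym2.map w) := by
    intro k
    fin_cases k
    · refine hed1.trans ?_; simp [L, Sym2.map_pair_eq]
    · refine hed2.trans ?_; simp [L, Sym2.map_pair_eq]
    · refine hed3.trans ?_; simp [L, Sym2.map_pair_eq]
    · refine hed4.trans ?_; simp [L, Sym2.map_pair_eq]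
  refine ⟨Set.range PT, ?_, ?_⟩
  · rintro T ⟨k, rfl⟩
    fin_cases k
    · exact ⟨hp1, hlen1, s(w 0, w 1), ⟨e01, nk01⟩, hmid1⟩
    · exact ⟨hp2, hlen2, s(w 2, w 3), ⟨e23, nk23⟩, hmid2⟩
    · exact ⟨hp3, hlen3, s(w 4, w 5), ⟨e45, nk45⟩, hmid3⟩
    · exact ⟨hp4, hlen4, s(w 6, w 7), ⟨e67, nk67⟩, hmid4⟩
  · intro e he
    induction e using Sym2.ind with
    | _ u v =>
      have hadj : G.Adj u v := (SimpleGraph.mem_edgeSet G).1 he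
      obtain ⟨i, rfl⟩ := hsurj u
      obtain ⟨j, rfl⟩ := hsurj v
      have hij : (((i:ℕ) < 4 ∧ 4 ≤ (j:ℕ)) ∨ (4 ≤ (i:ℕ) ∧ (j:ℕ) < 4)) ∨ j = mi i := by
        by_cases hk : K.Adj (w i) (w j)
        · exact Or.inl ((hKiff i j).1 hk)
        · exact Or.inr (hinj (hMuniq i j hadj hk))
      obtain ⟨k, hkmem, hkuniq⟩ := Lkey i j hij
      have hmapeq : s(w i, w j) = Sym2.map w s(i, j) := (Sym2.map_pair_eq w i j).symm
      refine ⟨PT k, ⟨⟨k, rfl⟩, ?_⟩, ?_⟩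
      · rw [hLmap k, hmapeq]
        exact List.mem_map_of_mem hkmem
      · rintro T ⟨⟨k', rfl⟩, hmem⟩
        rw [hLmap k'] at hmem
        obtain ⟨x, hx, hfx⟩ := List.mem_map.1 hmem
        have hxeq : x = s(i, j) := Sym2.map.injective hinj (by rw [hfx, Sym2.map_pair_eq])
        rw [hkuniq k' (hxeq ▸ hx)]

theorem cbg_adj : ∀ x y : Fin 4 ⊕ Fin 4,
    (completeBipartiteGraph (Fin 4) (Fin 4)).Adj x y ↔ x.isLeft ≠ y.isLeft := by
  intro x y
  cases x <;> cases y <;> simp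

/-- Every 5-regular graph `G` that contains a spanning copy `K` of the complete
bipartite graph `K_{4,4}` admits a decomposition into paths with 5 edges such that the middle
edge of each path belongs to `M = E(G) \ E(K)`. -/
theorem stmt_2 {V : Type*} [Fintype V]
    (G K : SimpleGraph V) (hKG : K ≤ G)
    (hK : Nonempty (K ≃g completeBipartiteGraph (Fin 4) (Fin 4)))
    (hreg : ∀ v : V, (G.neighborSet v).ncard = 5) :
    ∃ D : Set (Σ u : V, Σ v : V, G.Walk u v),
      (∀ T ∈ D, T.2.2.IsPath ∧ T.2.2.length = 5 ∧
        ∃ e ∈ G.edgeSet \ K.edgeSet, T.2.2.edges[2]? = some e) ∧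
      ∀ e ∈ G.edgeSet, ∃! T, T ∈ D ∧ e ∈ T.2.2.edges := by
  classical
  obtain ⟨φ⟩ := hK
  have hadj_iff : ∀ u v : V, K.Adj u v ↔ (φ u).isLeft ≠ (φ v).isLeft := by
    intro u v
    rw [← φ.map_adj_iff, cbg_adj]
  have hdeg : ∀ v : V, (G.neighborFinset v).card = 5 := by
    intro v
    have h := hreg v
    rw [neighborFinset_def, ← Set.ncard_eq_toFinset_card']
    exact h
  have hKnf : ∀ v : V, K.neighborFinset v =
      Finset.image (φ.symm) (Finset.univ.filter fun x => x.isLeft ≠ (φ v).isLeft) := by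
    intro v
    ext u
    simp only [mem_neighborFinset, Finset.mem_image, Finset.mem_filter, Finset.mem_univ, true_and]
    constructor
    · intro h
      refine ⟨φ u, ?_, by simp⟩
      have := (hadj_iff v u).1 h
      exact fun hc => this (by rw [hc])
    · rintro ⟨x, hx, rfl⟩
      refine (hadj_iff v _).2 ?_
      simpa using fun hc => hx (by rw [← hc])
  have hKdeg : ∀ v : V, (K.neighborFinset v).card = 4 := by
    intro v
    rw [hKnf v, Finset.card_image_of_injective _ (RelIso.injective φ.symm)]
    have : ∀ b : Bool, (Finset.univ.filter
        fun x : Fin 4 ⊕ Fin 4 => x.isLeft ≠ b).card = 4 := by decide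
    exact this _
  have hsub : ∀ v : V, K.neighborFinset v ⊆ G.neighborFinset v := by
    intro v u hu
    rw [mem_neighborFinset] at hu ⊢
    exact hKG hu
  have hdiff : ∀ v : V, ∃ u, G.neighborFinset v \ K.neighborFinset v = {u} := by
    intro v
    refine Finset.card_eq_one.1 ?_
    rw [Finset.card_sdiff_of_subset (hsub v), hdeg v, hKdeg v]
  choose m hm using hdiff
  have hmmem : ∀ v : V, m v ∈ G.neighborFinset v \ K.neighborFinset v := by
    intro v; rw [hm v]; exact Finset.mem_singleton_self _
  have hmG : ∀ v : V, G.Adj v (m v) := by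
    intro v
    have := (Finset.mem_sdiff.1 (hmmem v)).1
    rwa [mem_neighborFinset] at this
  have hmK : ∀ v : V, ¬K.Adj v (m v) := by
    intro v hc
    exact (Finset.mem_sdiff.1 (hmmem v)).2 ((mem_neighborFinset K v (m v)).2 hc)
  have hmu : ∀ v u : V, G.Adj v u → ¬K.Adj v u → u = m v := by
    intro v u h1 h2
    have : u ∈ G.neighborFinset v \ K.neighborFinset v :=
      Finset.mem_sdiff.2 ⟨(mem_neighborFinset G v u).2 h1,
        fun hc => h2 ((mem_neighborFinset K v u).1 hc)⟩
    rw [hm v] at this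
    exact Finset.mem_singleton.1 this
  have hmm : ∀ v : V, m (m v) = v :=
    fun v => (hmu (m v) v (hmG v).symm (fun h => hmK v h.symm)).symm
  have hmside : ∀ v : V, (φ (m v)).isLeft = (φ v).isLeft := by
    intro v
    have := hmK v
    rw [hadj_iff] at this
    push_neg at this
    exact this.symm
  have hmne : ∀ v : V, m v ≠ v := fun v => (hmG v).ne'
  obtain ⟨a, ha⟩ : ∃ a : Fin 4 → V, a = fun k => φ.symm (Sum.inl k) := ⟨_, rfl⟩
  obtain ⟨b, hb⟩ : ∃ b : Fin 4 → V, b = fun k => φ.symm (Sum.inr k) := ⟨_, rfl⟩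
  have hφa : ∀ k, φ (a k) = Sum.inl k := by intro k; rw [ha]; simp
  have hφb : ∀ k, φ (b k) = Sum.inr k := by intro k; rw [hb]; simp
  have hsidea : ∀ k, (φ (a k)).isLeft = true := by intro k; rw [hφa]; rfl
  have hsideb : ∀ k, (φ (b k)).isLeft = false := by intro k; rw [hφb]; rfl
  have hainj : Function.Injective a := by
    intro p q h
    have := congrArg φ h
    rw [hφa, hφa] at this
    exact Sum.inl.inj this
  have hbinj : Function.Injective b := by
    intro p q h
    have := congrArg φ h
    rw [hφb, hφb] at this
    exact Sum.inr.inj this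
  have hab : ∀ p q : Fin 4, a p ≠ b q := by
    intro p q h
    have := congrArg (fun v => (φ v).isLeft) h
    simp only [hsidea, hsideb] at this
    exact Bool.true_eq_false.mp this
  have hba : ∀ p q : Fin 4, b p ≠ a q := fun p q h => hab q p h.symm
  have hlefta : ∀ v : V, (φ v).isLeft = true → ∃ k, v = a k := by
    intro v hv
    rcases hx : φ v with k | k
    · refine ⟨k, ?_⟩
      rw [ha]
      simp only
      rw [← hx]
      simp
    · rw [hx] at hv; simp at hv
  have hleftb : ∀ v : V, (φ v).isLeft = false → ∃ k, v = b k := by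
    intro v hv
    rcases hx : φ v with k | k
    · rw [hx] at hv; simp at hv
    · refine ⟨k, ?_⟩
      rw [hb]
      simp only
      rw [← hx]
      simp
  -- left quadruple
  obtain ⟨k1, hk1⟩ := hlefta (m (a 0)) (by rw [hmside, hsidea])
  have hk10 : k1 ≠ 0 := by
    intro h; subst h; exact hmne (a 0) hk1
  obtain ⟨k2, hk20, hk21⟩ : ∃ k2 : Fin 4, k2 ≠ 0 ∧ k2 ≠ k1 := by
    by_cases h : k1 = 1
    · exact ⟨2, by decide, by rw [h]; decide⟩
    · exact ⟨1, by decide, fun hc => h hc.symm⟩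
  obtain ⟨k3, hk3⟩ := hlefta (m (a k2)) (by rw [hmside, hsidea])
  have hk32 : k3 ≠ k2 := by
    intro h
    rw [h] at hk3
    exact hmne (a k2) hk3
  have hk30 : k3 ≠ 0 := by
    intro h
    apply hk21
    apply hainj
    have h2 := congrArg m hk3
    rw [hmm, h, hk1] at h2
    exact h2
  have hk31 : k3 ≠ k1 := by
    intro h
    apply hk20
    apply hainj
    have h2 := congrArg m hk3
    rw [hmm, h, ← hk1, hmm] at h2
    exact h2
  -- right quadruple
  obtain ⟨l1, hl1⟩ := hleftb (m (b 0)) (by rw [hmside, hsideb])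
  have hl10 : l1 ≠ 0 := by
    intro h; subst h; exact hmne (b 0) hl1
  obtain ⟨l2, hl20, hl21⟩ : ∃ l2 : Fin 4, l2 ≠ 0 ∧ l2 ≠ l1 := by
    by_cases h : l1 = 1
    · exact ⟨2, by decide, by rw [h]; decide⟩
    · exact ⟨1, by decide, fun hc => h hc.symm⟩
  obtain ⟨l3, hl3⟩ := hleftb (m (b l2)) (by rw [hmside, hsideb])
  have hl32 : l3 ≠ l2 := by
    intro h
    rw [h] at hl3
    exact hmne (b l2) hl3
  have hl30 : l3 ≠ 0 := by
    intro h
    apply hl21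
    apply hbinj
    have h2 := congrArg m hl3
    rw [hmm, h, hl1] at h2
    exact h2
  have hl31 : l3 ≠ l1 := by
    intro h
    apply hl20
    apply hbinj
    have h2 := congrArg m hl3
    rw [hmm, h, ← hl1, hmm] at h2
    exact h2
  have hquad : ∀ x1 x2 x3 : Fin 4, x1 ≠ 0 → x2 ≠ 0 → x2 ≠ x1 → x3 ≠ 0 → x3 ≠ x1 → x3 ≠ x2 →
      ∀ k : Fin 4, k = 0 ∨ k = x1 ∨ k = x2 ∨ k = x3 := by decide
  obtain ⟨w, hw⟩ : ∃ w : Fin 8 → V,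
      w = ![a 0, a k1, a k2, a k3, b 0, b l1, b l2, b l3] := ⟨_, rfl⟩
  have hnd : ([a 0, a k1, a k2, a k3, b 0, b l1, b l2, b l3] : List V).Nodup := by
    simp [List.nodup_cons, hainj.eq_iff, hbinj.eq_iff, hab, hba,
      hk10, hk20, hk21, hk30, hk31, hk32, hl10, hl20, hl21, hl30, hl31, hl32,
      hk10.symm, hk20.symm, hk21.symm, hk30.symm, hk31.symm, hk32.symm,
      hl10.symm, hl20.symm, hl21.symm, hl30.symm, hl31.symm, hl32.symm]
  have hofn : List.ofFn w = [a 0, a k1, a k2, a k3, b 0, b l1, b l2, b l3] := by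
    rw [hw]
    rfl
  have hinj : Function.Injective w := List.nodup_ofFn.mp (by rw [hofn]; exact hnd)
  have hsurj : ∀ v : V, ∃ i, v = w i := by
    intro v
    rcases hbo : (φ v).isLeft with _ | _
    · obtain ⟨k, hk⟩ := hleftb v hbo
      rcases hquad l1 l2 l3 hl10 hl20 hl21 hl30 hl31 hl32 k with rfl | rfl | rfl | rfl
      · exact ⟨4, by rw [hw]; exact hk⟩
      · exact ⟨5, by rw [hw]; exact hk⟩
      · exact ⟨6, by rw [hw]; exact hk⟩
      · exact ⟨7, by rw [hw]; exact hk⟩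
    · obtain ⟨k, hk⟩ := hlefta v hbo
      rcases hquad k1 k2 k3 hk10 hk20 hk21 hk30 hk31 hk32 k with rfl | rfl | rfl | rfl
      · exact ⟨0, by rw [hw]; exact hk⟩
      · exact ⟨1, by rw [hw]; exact hk⟩
      · exact ⟨2, by rw [hw]; exact hk⟩
      · exact ⟨3, by rw [hw]; exact hk⟩
  have hside : ∀ i : Fin 8, (φ (w i)).isLeft = decide ((i : ℕ) < 4) := by
    intro i
    fin_cases i <;> rw [hw]
    · exact hsidea 0
    · exact hsidea k1
    · exact hsidea k2
    · exact hsidea k3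
    · exact hsideb 0
    · exact hsideb l1
    · exact hsideb l2
    · exact hsideb l3
  have hKiff : ∀ i j : Fin 8, K.Adj (w i) (w j) ↔
      (((i:ℕ) < 4 ∧ 4 ≤ (j:ℕ)) ∨ (4 ≤ (i:ℕ) ∧ (j:ℕ) < 4)) := by
    intro i j
    rw [hadj_iff (w i) (w j), hside i, hside j]
    by_cases hi : (i:ℕ) < 4 <;> by_cases hj : (j:ℕ) < 4 <;> simp [hi, hj] <;> omega
  have hk1' : m (a k1) = a 0 := by rw [← hk1, hmm]
  have hk3' : m (a k3) = a k2 := by rw [← hk3, hmm]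
  have hl1' : m (b l1) = b 0 := by rw [← hl1, hmm]
  have hl3' : m (b l3) = b l2 := by rw [← hl3, hmm]
  have hmw : ∀ i : Fin 8, m (w i) = w (mi i) := by
    intro i
    fin_cases i <;> rw [hw]
    · exact hk1
    · exact hk1'
    · exact hk3
    · exact hk3'
    · exact hl1
    · exact hl1'
    · exact hl3
    · exact hl3'
  have hMadj : ∀ i : Fin 8, G.Adj (w i) (w (mi i)) := fun i => hmw i ▸ hmG (w i)
  have hMuniq : ∀ i j : Fin 8, G.Adj (w i) (w j) → ¬K.Adj (w i) (w j) → w j = w (mi i) := by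
    intro i j h1 h2
    rw [← hmw i]
    exact hmu (w i) (w j) h1 h2
  exact aux G K hKG w hinj hsurj hKiff hMadj hMuniq
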